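/- arXiv:2202.08419 — 2 statements merged into one kernel-verified Lean document; each statement's English description precedes it below -/
import Mathlib

section
/- Let β̂, β₀ ∈ ℝ^p with ‖β̂‖₁ ≤ ‖β₀‖₁, let a := ‖β̂ − β₀‖_max := maxⱼ |β̂ⱼ − β₀ⱼ| with a > 0, and suppose Σⱼ |β₀ⱼ|^δ ≤ s for some δ ∈ [0,1) and s > 0 (0^0 := 0). Then ‖β̂ − β₀‖₁ ≤ 2(1 + 3^{1−δ} + 2·2^{1−δ}) · s · a^{1−δ}. In particular, ‖β̂ − β₀‖₁ ≤ C s a^{1−δ} for an absolute constant C depending only on δ. -/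
/-- The ℓ¹ norm on ℝ^p. -/
noncomputable def l1 {p : ℕ} (x : Fin p → ℝ) : ℝ := ∑ i, |x i|

/-- `wpow x δ` is `x ^ δ` (real power) with the convention `0 ^ 0 = 0`. -/
noncomputable def wpow (x δ : ℝ) : ℝ := if x = 0 then 0 else x ^ δ

/-- Deterministic core of Theorem 1: from an ℓ¹ domination and a max-norm error
bound, one gets an ℓ¹ error bound under weak sparsity of the truth. Here `a` is
the maximum of `|β̂ⱼ − β₀ⱼ|` (expressed via `IsGreatest`). -/
theorem stmt3 {p : ℕ} (βh β0 : Fin p → ℝ) (δ s a : ℝ)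
    (hδ0 : 0 ≤ δ) (hδ1 : δ < 1) (hs : 0 < s)
    (hdom : l1 βh ≤ l1 β0)
    (ha : IsGreatest (Set.range fun j => |βh j - β0 j|) a) (hapos : 0 < a)
    (hsp : ∑ j, wpow |β0 j| δ ≤ s) :
    l1 (βh - β0) ≤ 2 * (1 + 3 ^ (1 - δ) + 2 * 2 ^ (1 - δ)) * s * a ^ (1 - δ) := by
  have ha' : ∀ j, |βh j - β0 j| ≤ a := fun j => ha.2 ⟨j, rfl⟩
  have h1δ : (0:ℝ) ≤ 1 - δ := by linarith
  set S := Finset.univ.filter (fun j : Fin p => a < |β0 j|) with hSdef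
  have haδ : (0:ℝ) < a ^ δ := Real.rpow_pos_of_pos hapos δ
  have hwnn : ∀ j : Fin p, 0 ≤ wpow |β0 j| δ := by
    intro j
    unfold wpow
    split
    · exact le_refl 0
    · exact Real.rpow_nonneg (abs_nonneg _) δ
  -- bound on the sum of wpow over S
  have hsum_S_w : ∑ j ∈ S, wpow |β0 j| δ ≤ s :=
    le_trans (Finset.sum_le_sum_of_subset_of_nonneg (Finset.subset_univ S)
      (fun j _ _ => hwnn j)) hsp
  -- card bound
  have hcard : (S.card : ℝ) * a ^ δ ≤ s := by
    calc (S.card : ℝ) * a ^ δ = ∑ _j ∈ S, a ^ δ := by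
          rw [Finset.sum_const, nsmul_eq_mul]
      _ ≤ ∑ j ∈ S, wpow |β0 j| δ := by
          apply Finset.sum_le_sum
          intro j hj
          have hj' : a < |β0 j| := (Finset.mem_filter.mp hj).2
          have hne : |β0 j| ≠ 0 := (hapos.trans hj').ne'
          rw [wpow, if_neg hne]
          exact Real.rpow_le_rpow hapos.le hj'.le hδ0
      _ ≤ s := hsum_S_w
  -- bound Σ_S |h| ≤ s * a^(1-δ)
  have hSbound : ∑ j ∈ S, |βh j - β0 j| ≤ s * a ^ (1 - δ) := by
    have h1 : ∑ j ∈ S, |βh j - β0 j| ≤ (S.card : ℝ) * a := by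
      calc ∑ j ∈ S, |βh j - β0 j| ≤ ∑ _j ∈ S, a :=
            Finset.sum_le_sum (fun j _ => ha' j)
        _ = (S.card : ℝ) * a := by rw [Finset.sum_const, nsmul_eq_mul]
    have h2 : (S.card : ℝ) * a ≤ s * a ^ (1 - δ) := by
      rw [Real.rpow_sub hapos, Real.rpow_one, mul_comm s, div_mul_eq_mul_div,
        le_div_iff₀ haδ]
      nlinarith [hcard, hapos.le, haδ.le]
    linarith
  -- bound Σ_Sc |β0| ≤ s * a^(1-δ)
  have hScbound : ∑ j ∈ Sᶜ, |β0 j| ≤ s * a ^ (1 - δ) := by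
    have key : ∀ j ∈ Sᶜ, |β0 j| ≤ wpow |β0 j| δ * a ^ (1 - δ) := by
      intro j hj
      have hj' : ¬ a < |β0 j| := by
        simpa [hSdef] using hj
      have hle : |β0 j| ≤ a := not_lt.mp hj'
      rcases eq_or_ne (β0 j) 0 with h0 | h0
      · simp [wpow, h0]
      · have hpos : 0 < |β0 j| := abs_pos.mpr h0
        have hne : |β0 j| ≠ 0 := hpos.ne'
        rw [wpow, if_neg hne]
        have : |β0 j| = |β0 j| ^ δ * |β0 j| ^ (1 - δ) := by
          rw [← Real.rpow_add hpos]
          norm_num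
        calc |β0 j| = |β0 j| ^ δ * |β0 j| ^ (1 - δ) := this
          _ ≤ |β0 j| ^ δ * a ^ (1 - δ) :=
              mul_le_mul_of_nonneg_left (Real.rpow_le_rpow hpos.le hle h1δ)
                (Real.rpow_nonneg (abs_nonneg _) δ)
    calc ∑ j ∈ Sᶜ, |β0 j| ≤ ∑ j ∈ Sᶜ, wpow |β0 j| δ * a ^ (1 - δ) :=
          Finset.sum_le_sum key
      _ = (∑ j ∈ Sᶜ, wpow |β0 j| δ) * a ^ (1 - δ) := by
          rw [Finset.sum_mul]
      _ ≤ s * a ^ (1 - δ) := by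
          apply mul_le_mul_of_nonneg_right _ (Real.rpow_nonneg hapos.le _)
          exact le_trans (Finset.sum_le_sum_of_subset_of_nonneg (Finset.subset_univ _)
            (fun j _ _ => hwnn j)) hsp
  -- core inequality from hdom
  have hsplit : ∀ f : Fin p → ℝ, ∑ j, f j = ∑ j ∈ S, f j + ∑ j ∈ Sᶜ, f j := by
    intro f
    rw [← Finset.sum_add_sum_compl S f]
  have hScerr : ∑ j ∈ Sᶜ, |βh j - β0 j| ≤
      ∑ j ∈ S, |βh j - β0 j| + 2 * ∑ j ∈ Sᶜ, |β0 j| := by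
    have e1 : ∀ j, |β0 j| - |βh j - β0 j| ≤ |βh j| := by
      intro j
      have := abs_sub_abs_le_abs_sub (β0 j) (βh j)
      have habs : |β0 j - βh j| = |βh j - β0 j| := abs_sub_comm _ _
      linarith [this, habs ▸ this]
    have e2 : ∀ j, |βh j - β0 j| - |β0 j| ≤ |βh j| := by
      intro j
      have := abs_sub_abs_le_abs_sub (βh j - β0 j) (-(β0 j))
      have h' : |βh j - β0 j| - |β0 j| ≤ |βh j - β0 j - (-(β0 j))| := by
        simpa [abs_neg] using this
      simpa [sub_neg_eq_add, sub_add_cancel] using h'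
    have hA : ∑ j ∈ S, (|β0 j| - |βh j - β0 j|) ≤ ∑ j ∈ S, |βh j| :=
      Finset.sum_le_sum (fun j _ => e1 j)
    have hB : ∑ j ∈ Sᶜ, (|βh j - β0 j| - |β0 j|) ≤ ∑ j ∈ Sᶜ, |βh j| :=
      Finset.sum_le_sum (fun j _ => e2 j)
    have hdom' : ∑ j ∈ S, |βh j| + ∑ j ∈ Sᶜ, |βh j| ≤
        ∑ j ∈ S, |β0 j| + ∑ j ∈ Sᶜ, |β0 j| := by
      have := hdom
      unfold l1 at this
      rw [hsplit (fun j => |βh j|), hsplit (fun j => |β0 j|)] at this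
      exact this
    rw [Finset.sum_sub_distrib] at hA hB
    linarith
  -- put it together: l1 h ≤ 4 s a^(1-δ)
  have hfour : l1 (βh - β0) ≤ 4 * (s * a ^ (1 - δ)) := by
    unfold l1
    have : ∑ j, |(βh - β0) j| = ∑ j ∈ S, |βh j - β0 j| + ∑ j ∈ Sᶜ, |βh j - β0 j| := by
      rw [hsplit (fun j => |(βh - β0) j|)]
      simp [Pi.sub_apply]
    rw [this]
    linarith
  -- the stated constant is ≥ 4
  have h3 : (1:ℝ) ≤ (3:ℝ) ^ (1 - δ) := Real.one_le_rpow (by norm_num) h1δ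
  have h2 : (1:ℝ) ≤ (2:ℝ) ^ (1 - δ) := Real.one_le_rpow (by norm_num) h1δ
  have hsa : 0 < s * a ^ (1 - δ) := mul_pos hs (Real.rpow_pos_of_pos hapos _)
  calc l1 (βh - β0) ≤ 4 * (s * a ^ (1 - δ)) := hfour
    _ ≤ 2 * (1 + 3 ^ (1 - δ) + 2 * 2 ^ (1 - δ)) * s * a ^ (1 - δ) := by
        nlinarith [hsa, Real.rpow_pos_of_pos hapos (1 - δ)]
end

section
/- Let h > 0, δ ∈ [0,1), s > 0, and let u, v ∈ ℝ^p satisfy ‖u − v‖_max ≤ h/2 and Σⱼ |vⱼ|^δ ≤ s (0^0 := 0). Let s(·): ℝ → ℝ satisfy |s(x) − x| ≤ h for all x, and define ũⱼ := s(uⱼ)·1{|uⱼ| ≥ h}. Then ‖ũ − v‖₁ ≤ C s h^{1−δ}, where C is a constant depending only on δ (one may take C = (3/2)·2^δ + (3/2)^{1−δ}). -/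
/-- Deterministic content of Theorem 4 (TED): thresholding an element-wise
accurate estimator of a weakly sparse target yields an ℓ¹ bound `C s h^{1-δ}`
with `C = (3/2)·2^δ + (3/2)^{1-δ}`. -/
theorem stmt11 {p : ℕ} (h δ sp : ℝ) (u v : Fin p → ℝ) (s : ℝ → ℝ)
    (hh : 0 < h) (hδ0 : 0 ≤ δ) (hδ1 : δ < 1) (hsp0 : 0 < sp)
    (hmax : ∀ j, |u j - v j| ≤ h / 2)
    (hv : ∑ j, wpow |v j| δ ≤ sp)
    (hs : ∀ x, |s x - x| ≤ h) :
    l1 ((fun j => s (u j) * (if h ≤ |u j| then (1:ℝ) else 0)) - v) ≤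
      ((3 / 2) * 2 ^ δ + (3 / 2) ^ (1 - δ)) * sp * h ^ (1 - δ) := by
  set a : ℝ := (3/2) * 2 ^ δ with ha
  set b : ℝ := (3/2) ^ (1 - δ) with hb
  have hδ' : (0:ℝ) ≤ 1 - δ := by linarith
  have ha0 : 0 ≤ a := by
    have : (0:ℝ) ≤ (2:ℝ) ^ δ := Real.rpow_nonneg (by norm_num) δ
    positivity
  have hb0 : 0 ≤ b := Real.rpow_nonneg (by norm_num) _
  have hhp : (0:ℝ) ≤ h ^ (1 - δ) := Real.rpow_nonneg hh.le _
  have key : ∀ j, |(s (u j) * (if h ≤ |u j| then (1:ℝ) else 0)) - v j|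
      ≤ (a + b) * h ^ (1 - δ) * wpow |v j| δ := by
    intro j
    have hw0 : 0 ≤ wpow |v j| δ := by
      unfold wpow
      split
      · exact le_refl 0
      · exact Real.rpow_nonneg (abs_nonneg _) δ
    by_cases hj : h ≤ |u j|
    · simp only [if_pos hj, mul_one]
      have hv2 : h/2 ≤ |v j| := by
        have h1 := hmax j
        have h2 : |u j| - |v j| ≤ |u j - v j| := abs_sub_abs_le_abs_sub _ _
        linarith
      have hvpos : (0:ℝ) < |v j| := lt_of_lt_of_le (by linarith) hv2
      have hw : wpow |v j| δ = |v j| ^ δ := by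
        unfold wpow; rw [if_neg hvpos.ne']
      have h1 : |s (u j) - v j| ≤ 3/2 * h := by
        have h2 := hs (u j); have h3 := hmax j
        calc |s (u j) - v j| = |(s (u j) - u j) + (u j - v j)| := by ring_nf
          _ ≤ |s (u j) - u j| + |u j - v j| := abs_add_le _ _
          _ ≤ 3/2 * h := by linarith
      have hrp : (h/2) ^ δ ≤ |v j| ^ δ :=
        Real.rpow_le_rpow (by positivity) hv2 hδ0
      have hd : ((h:ℝ)/2) ^ δ = h ^ δ / 2 ^ δ :=
        Real.div_rpow hh.le (by norm_num : (0:ℝ) ≤ 2) δ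
      have hmul : h ^ (1 - δ) * h ^ δ = h := by
        rw [← Real.rpow_add hh]; norm_num
      have h2pos : (0:ℝ) < (2:ℝ) ^ δ := Real.rpow_pos_of_pos (by norm_num) δ
      have hgoal : 3/2 * h ≤ a * h ^ (1 - δ) * |v j| ^ δ := by
        have : a * h ^ (1 - δ) * (h/2) ^ δ = 3/2 * h := by
          rw [hd, ha]
          rw [show (3/2 : ℝ) * 2 ^ δ * h ^ (1-δ) * (h ^ δ / 2 ^ δ)
              = (3/2) * (h ^ (1-δ) * h ^ δ) * (2 ^ δ / 2 ^ δ) by ring]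
          rw [hmul, div_self h2pos.ne']; ring
        calc 3/2 * h = a * h ^ (1 - δ) * (h/2) ^ δ := this.symm
          _ ≤ a * h ^ (1 - δ) * |v j| ^ δ := by
              apply mul_le_mul_of_nonneg_left hrp (by positivity)
      rw [hw]
      have hnn : 0 ≤ b * h ^ (1 - δ) * |v j| ^ δ := by positivity
      have : (a + b) * h ^ (1 - δ) * |v j| ^ δ
          = a * h ^ (1 - δ) * |v j| ^ δ + b * h ^ (1 - δ) * |v j| ^ δ := by ring
      rw [this]
      linarith
    · simp only [if_neg hj, mul_zero, zero_sub, abs_neg]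
      by_cases hz : v j = 0
      · simp only [hz, abs_zero]
        rw [show wpow 0 δ = 0 from if_pos rfl]
        simp
      · have hvpos : (0:ℝ) < |v j| := abs_pos.mpr hz
        have hw : wpow |v j| δ = |v j| ^ δ := by
          unfold wpow; rw [if_neg hvpos.ne']
        have hv3 : |v j| ≤ 3/2 * h := by
          have h1 := hmax j
          have h2 : |v j| - |u j| ≤ |u j - v j| := by
            rw [abs_sub_comm]; exact abs_sub_abs_le_abs_sub _ _
          push_neg at hj
          linarith
        have hsplit : |v j| = |v j| ^ (1 - δ) * |v j| ^ δ := by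
          rw [← Real.rpow_add hvpos]; norm_num
        have hmono : |v j| ^ (1 - δ) ≤ (3/2 * h) ^ (1 - δ) :=
          Real.rpow_le_rpow (abs_nonneg _) hv3 hδ'
        have hfac : ((3:ℝ)/2 * h) ^ (1 - δ) = b * h ^ (1 - δ) := by
          rw [hb, Real.mul_rpow (by norm_num) hh.le]
        have hgoal : |v j| ≤ b * h ^ (1 - δ) * |v j| ^ δ := by
          calc |v j| = |v j| ^ (1 - δ) * |v j| ^ δ := hsplit
            _ ≤ (3/2 * h) ^ (1 - δ) * |v j| ^ δ := by
                apply mul_le_mul_of_nonneg_right hmono (by positivity)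
            _ = b * h ^ (1 - δ) * |v j| ^ δ := by rw [hfac]
        rw [hw]
        have hnn : 0 ≤ a * h ^ (1 - δ) * |v j| ^ δ := by positivity
        have : (a + b) * h ^ (1 - δ) * |v j| ^ δ
            = a * h ^ (1 - δ) * |v j| ^ δ + b * h ^ (1 - δ) * |v j| ^ δ := by ring
        rw [this]
        linarith
  calc l1 ((fun j => s (u j) * (if h ≤ |u j| then (1:ℝ) else 0)) - v)
      = ∑ j, |(s (u j) * (if h ≤ |u j| then (1:ℝ) else 0)) - v j| := by
        unfold l1; simp [Pi.sub_apply]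
    _ ≤ ∑ j, (a + b) * h ^ (1 - δ) * wpow |v j| δ :=
        Finset.sum_le_sum fun j _ => key j
    _ = (a + b) * h ^ (1 - δ) * ∑ j, wpow |v j| δ := by rw [Finset.mul_sum]
    _ ≤ (a + b) * h ^ (1 - δ) * sp := by
        apply mul_le_mul_of_nonneg_left hv (by positivity)
    _ = (a + b) * sp * h ^ (1 - δ) := by ring
end
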